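/- arXiv:1606.06078 — 3 statements merged into one kernel-verified Lean document; each statement's English description precedes it below -/
import Mathlib

section
/- Let p be an integer with |p| ≥ 2 and μ a Borel probability measure on 𝕋 invariant under T_p. If μ is an ergodic T_p-invariant measure, then for every Følner sequence {F_n} in ℕ and all k, l ∈ ℤ: lim_{n→∞} (1/|F_n|) Σ_{j ∈ F_n} μ̂(k p^j + l) = μ̂(k) μ̂(l). -/
set_option maxHeartbeats 1000000


open MeasureTheory Filter

/-- The circle ℝ/ℤ. -/
abbrev Torus : Type := AddCircle (1 : ℝ)

/-- The times-`q` map `x ↦ qx` on ℝ/ℤ. -/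
noncomputable def timesMap (q : ℤ) : Torus → Torus := fun x => q • x

/-- The `k`-th Fourier coefficient of a measure on ℝ/ℤ. -/
noncomputable def fc (μ : Measure Torus) (k : ℤ) : ℂ :=
  ∫ x : Torus, fourier k x ∂μ

/-- A Følner sequence of finite subsets of ℕ. -/
def IsFolner (F : ℕ → Finset ℕ) : Prop :=
  (∀ n, (F n).Nonempty) ∧ ∀ m : ℕ, Tendsto
    (fun n => ((symmDiff ((F n).image (· + m)) (F n)).card : ℝ) / (F n).card)
    atTop (nhds 0)

local notation "⟪" x ", " y "⟫" => @inner ℂ _ _ x y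

section Aux

variable {E : Type*} [NormedAddCommGroup E]

/-- Følner averages of iterates of a contraction vanish on the closure of the range of `U - 1`. -/
lemma aux_folner_zero [NormedSpace ℂ E] (U : E →L[ℂ] E) (hU : ∀ v : E, ‖U v‖ ≤ ‖v‖)
    (F : ℕ → Finset ℕ) (hne : ∀ n, (F n).Nonempty)
    (hF1 : Tendsto (fun n => ((symmDiff ((F n).image (· + 1)) (F n)).card : ℝ) / (F n).card)
      atTop (nhds 0))
    (y : E) (hy : y ∈ closure (LinearMap.range ((U : E →ₗ[ℂ] E) - 1) : Set E)) :
    Tendsto (fun n => (((F n).card : ℂ))⁻¹ • ∑ j ∈ F n, (⇑U)^[j] y) atTop (nhds 0) := by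
  have hiter : ∀ (j : ℕ) (v : E), ‖(⇑U)^[j] v‖ ≤ ‖v‖ := by
    intro j
    induction j with
    | zero => intro v; simp
    | succ n ih =>
        intro v
        rw [Function.iterate_succ_apply]
        exact (ih (U v)).trans (hU v)
  have hsub : ∀ (j : ℕ) (x y : E), (⇑U)^[j] (x - y) = (⇑U)^[j] x - (⇑U)^[j] y := by
    intro j
    induction j with
    | zero => intro x y; simp
    | succ n ih =>
        intro x y
        simp only [Function.iterate_succ_apply, map_sub, ih]
  set A : ℕ → E → E := fun n v => (((F n).card : ℂ))⁻¹ • ∑ j ∈ F n, (⇑U)^[j] v with hA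
  have hcardpos : ∀ n, (0:ℝ) < (F n).card := fun n => by
    exact_mod_cast (hne n).card_pos
  have hAnorm : ∀ (n : ℕ) (v : E), ‖A n v‖ ≤ ‖v‖ := by
    intro n v
    rw [hA]
    simp only [norm_smul, norm_inv, Complex.norm_natCast]
    calc ((F n).card : ℝ)⁻¹ * ‖∑ j ∈ F n, (⇑U)^[j] v‖
        ≤ ((F n).card : ℝ)⁻¹ * ∑ j ∈ F n, ‖(⇑U)^[j] v‖ := by
          gcongr
          exact norm_sum_le _ _
      _ ≤ ((F n).card : ℝ)⁻¹ * ∑ _j ∈ F n, ‖v‖ := by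
          gcongr with j hj
          exact hiter j v
      _ = ‖v‖ := by
          rw [Finset.sum_const, nsmul_eq_mul, ← mul_assoc,
            inv_mul_cancel₀ (ne_of_gt (hcardpos n)), one_mul]
  rw [NormedAddCommGroup.tendsto_nhds_zero]
  intro ε hε
  obtain ⟨w, hwmem, hwdist⟩ := Metric.mem_closure_iff.1 hy (ε/2) (by positivity)
  obtain ⟨v, rfl⟩ := hwmem
  set w := ((U : E →ₗ[ℂ] E) - 1) v with hwdef
  have hwv : w = U v - v := by simp [hwdef]
  have hbound : ∀ n, ‖A n w‖ ≤
      (((symmDiff ((F n).image (· + 1)) (F n)).card : ℝ) / (F n).card) * ‖v‖ := by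
    intro n
    have hinj : ∀ a ∈ F n, ∀ b ∈ F n, a + 1 = b + 1 → a = b := by omega
    have hsum1 : ∑ j ∈ F n, (⇑U)^[j] w =
        (∑ j ∈ (F n).image (· + 1), (⇑U)^[j] v) - ∑ j ∈ F n, (⇑U)^[j] v := by
      rw [Finset.sum_image hinj, ← Finset.sum_sub_distrib]
      refine Finset.sum_congr rfl fun j hj => ?_
      rw [hwv, hsub j (U v) v, ← Function.iterate_succ_apply, Function.iterate_succ_apply']
    set B := F n
    set B' := B.image (· + 1)
    have hsplit : (∑ j ∈ B', (⇑U)^[j] v) - ∑ j ∈ B, (⇑U)^[j] v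
        = (∑ j ∈ B' \ B, (⇑U)^[j] v) - ∑ j ∈ B \ B', (⇑U)^[j] v := by
      rw [← Finset.sum_inter_add_sum_sdiff B' B fun j => (⇑U)^[j] v,
        ← Finset.sum_inter_add_sum_sdiff B B' fun j => (⇑U)^[j] v, Finset.inter_comm]
      abel
    have hcard : ((B' \ B).card : ℝ) + ((B \ B').card : ℝ) = ((symmDiff B' B).card : ℝ) := by
      rw [symmDiff_def, Finset.sup_eq_union,
        Finset.card_union_of_disjoint disjoint_sdiff_sdiff]
      push_cast
      ring
    have hnorm1 : ‖∑ j ∈ B, (⇑U)^[j] w‖ ≤ ((symmDiff B' B).card : ℝ) * ‖v‖ := by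
      rw [hsum1, hsplit]
      calc ‖(∑ j ∈ B' \ B, (⇑U)^[j] v) - ∑ j ∈ B \ B', (⇑U)^[j] v‖
          ≤ ‖∑ j ∈ B' \ B, (⇑U)^[j] v‖ + ‖∑ j ∈ B \ B', (⇑U)^[j] v‖ := norm_sub_le _ _
        _ ≤ (∑ j ∈ B' \ B, ‖(⇑U)^[j] v‖) + ∑ j ∈ B \ B', ‖(⇑U)^[j] v‖ := by
            gcongr <;> exact norm_sum_le _ _
        _ ≤ ((B' \ B).card : ℝ) * ‖v‖ + ((B \ B').card : ℝ) * ‖v‖ := by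
            have hb1 : (∑ j ∈ B' \ B, ‖(⇑U)^[j] v‖) ≤ ((B' \ B).card : ℝ) * ‖v‖ :=
              (Finset.sum_le_card_nsmul _ _ ‖v‖ fun j _ => hiter j v).trans (by rw [nsmul_eq_mul])
            have hb2 : (∑ j ∈ B \ B', ‖(⇑U)^[j] v‖) ≤ ((B \ B').card : ℝ) * ‖v‖ :=
              (Finset.sum_le_card_nsmul _ _ ‖v‖ fun j _ => hiter j v).trans (by rw [nsmul_eq_mul])
            exact add_le_add hb1 hb2
        _ = ((symmDiff B' B).card : ℝ) * ‖v‖ := by rw [← add_mul, hcard]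
    rw [hA]
    simp only [norm_smul, norm_inv, Complex.norm_natCast]
    calc (((F n).card : ℝ))⁻¹ * ‖∑ j ∈ B, (⇑U)^[j] w‖
        ≤ (((F n).card : ℝ))⁻¹ * (((symmDiff B' B).card : ℝ) * ‖v‖) := by
          gcongr
      _ = (((symmDiff B' B).card : ℝ) / (F n).card) * ‖v‖ := by ring
  have hto0 : Tendsto (fun n =>
      (((symmDiff ((F n).image (· + 1)) (F n)).card : ℝ) / (F n).card) * ‖v‖) atTop (nhds 0) := by
    simpa using hF1.mul_const ‖v‖
  have hev : ∀ᶠ n in atTop,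
      (((symmDiff ((F n).image (· + 1)) (F n)).card : ℝ) / (F n).card) * ‖v‖ < ε / 2 :=
    hto0.eventually_lt_const (by positivity)
  filter_upwards [hev] with n hn
  have h1 : A n y = A n (y - w) + A n w := by
    rw [hA]
    simp only [hsub, Finset.sum_sub_distrib, smul_sub]
    abel
  calc ‖A n y‖ ≤ ‖A n (y - w)‖ + ‖A n w‖ := by rw [h1]; exact norm_add_le _ _
    _ ≤ ‖y - w‖ + ‖A n w‖ := by gcongr; exact hAnorm n _
    _ < ε / 2 + ε / 2 := by
        have : ‖y - w‖ < ε / 2 := by rwa [dist_eq_norm] at hwdist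
        have h2 := (hbound n).trans_lt hn
        gcongr
    _ = ε := add_halves ε

/-- The orthogonal complement of the fixed space of a contraction is contained in the
closure of the range of `U - 1`. -/
lemma aux_orth [InnerProductSpace ℂ E] [CompleteSpace E] (f : E →L[ℂ] E) (hf : ‖f‖ ≤ 1) :
    (((LinearMap.eqLocus (f : E →ₗ[ℂ] E) 1)ᗮ : Submodule ℂ E) : Set E) ⊆
      closure (LinearMap.range ((f : E →ₗ[ℂ] E) - 1) : Set E) := by
  rw [← Submodule.topologicalClosure_coe, SetLike.coe_subset_coe,
    ← Submodule.orthogonal_orthogonal_eq_closure]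
  refine Submodule.orthogonal_le fun x hx => eq_of_norm_le_re_inner_eq_norm_sq (𝕜 := ℂ) ?_ ?_
  · simpa using f.le_of_opNorm_le hf x
  · have : ∀ y, ⟪f y, x⟫ = ⟪y, x⟫ := by
      simpa [Submodule.mem_orthogonal, inner_sub_left, sub_eq_zero] using hx
    simp [this, ← Complex.ofReal_pow]

end Aux

theorem stmt9 (p : ℤ) (hp : 2 ≤ |p|) (μ : Measure Torus) [IsProbabilityMeasure μ]
    (herg : Ergodic (timesMap p) μ) (F : ℕ → Finset ℕ) (hF : IsFolner F) (k l : ℤ) :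
    Tendsto (fun n => (1 / ((F n).card : ℂ)) * ∑ j ∈ F n, fc μ (k * p ^ j + l))
      atTop (nhds (fc μ k * fc μ l)) := by
  classical
  have hT : MeasurePreserving (timesMap p) μ μ := herg.toMeasurePreserving
  set U : Lp ℂ 2 μ →L[ℂ] Lp ℂ 2 μ :=
    (Lp.compMeasurePreservingₗᵢ ℂ (timesMap p) hT).toContinuousLinearMap with hUdef
  have hUapp : ∀ g : Lp ℂ 2 μ, U g = Lp.compMeasurePreserving (timesMap p) hT g := fun g => rfl
  have hUnorm1 : ∀ v : Lp ℂ 2 μ, ‖U v‖ = ‖v‖ := fun v =>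
    Lp.norm_compMeasurePreserving v hT
  have hmem : ∀ m : ℤ, MemLp (fun x : Torus => (fourier m x : ℂ)) 2 μ := fun m =>
    MemLp.of_bound (map_continuous (fourier m)).aestronglyMeasurable 1
      (Eventually.of_forall fun x => by
        rw [fourier_apply]
        exact le_of_eq (Circle.norm_coe _))
  set em : ℤ → Lp ℂ 2 μ := fun m => (hmem m).toLp _ with hemdef
  have h_coe : ∀ m, ⇑(em m) =ᵐ[μ] fun x => (fourier m x : ℂ) := fun m => MemLp.coeFn_toLp _
  have hfT : ∀ (m : ℤ) (x : Torus), (fourier m (timesMap p x) : ℂ) = fourier (m * p) x := by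
    intro m x
    show (fourier m (p • x) : ℂ) = _
    rw [fourier_apply, fourier_apply, smul_smul]
  have hUem : ∀ m : ℤ, U (em m) = em (m * p) := by
    intro m
    rw [hUapp, hemdef]
    dsimp only
    rw [Lp.toLp_compMeasurePreserving]
    exact MemLp.toLp_congr _ _ (Eventually.of_forall fun x => hfT m x)
  have hUiter : ∀ (j : ℕ) (m : ℤ), (⇑U)^[j] (em m) = em (m * p ^ j) := by
    intro j
    induction j with
    | zero => intro m; simp
    | succ n ih =>
        intro m
        rw [Function.iterate_succ_apply, hUem, ih]
        congr 1
        ring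
  have h_inner : ∀ a b : ℤ, ⟪em a, em b⟫ = fc μ (b - a) := by
    intro a b
    rw [L2.inner_def, fc]
    refine integral_congr_ae ?_
    filter_upwards [h_coe a, h_coe b] with x hxa hxb
    rw [RCLike.inner_apply, hxa, hxb, ← fourier_neg, ← fourier_add, ← sub_eq_add_neg]
  have hfc0 : fc μ (0:ℤ) = 1 := by
    simp [fc, fourier_zero]
  set c := fc μ k with hc
  set r : Lp ℂ 2 μ := em k - c • em 0 with hrdef
  have h_inner_one_r : ⟪em 0, r⟫ = 0 := by
    rw [hrdef, inner_sub_right, inner_smul_right, h_inner, h_inner]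
    simp [hfc0, hc]
  have hrmem : r ∈ (LinearMap.eqLocus (U : Lp ℂ 2 μ →ₗ[ℂ] Lp ℂ 2 μ) 1)ᗮ := by
    rw [Submodule.mem_orthogonal]
    intro u hu
    have hu' : U u = u := hu
    have h1 : ⇑u ∘ (timesMap p) =ᵐ[μ] ⇑u := by
      have h2 := Lp.coeFn_compMeasurePreserving u hT
      rw [← hUapp, hu'] at h2
      exact h2.symm
    obtain ⟨cu, hcu⟩ := herg.ae_eq_const_of_ae_eq_comp_ae (Lp.aestronglyMeasurable u) h1
    have h3 : ⟪u, r⟫ = (starRingEnd ℂ) cu * ⟪em 0, r⟫ := by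
      rw [L2.inner_def, L2.inner_def, ← integral_const_mul]
      refine integral_congr_ae ?_
      filter_upwards [hcu, h_coe 0] with x hx h0
      rw [RCLike.inner_apply, RCLike.inner_apply, hx, h0, fourier_zero]
      simp [Function.const, mul_comm]
    rw [h3, h_inner_one_r, mul_zero]
  have hU1 : ‖U‖ ≤ 1 := by
    rw [hUdef]
    exact LinearIsometry.norm_toContinuousLinearMap_le _
  have hrcl := aux_orth U hU1 hrmem
  have hB := aux_folner_zero U (fun v => le_of_eq (hUnorm1 v)) F hF.1 (hF.2 1) r hrcl
  have hlin : ∀ (j : ℕ) (a : ℂ) (x y : Lp ℂ 2 μ),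
      (⇑U)^[j] (a • x + y) = a • (⇑U)^[j] x + (⇑U)^[j] y := by
    intro j
    induction j with
    | zero => intro a x y; simp
    | succ n ih =>
        intro a x y
        rw [Function.iterate_succ_apply, U.map_add, U.map_smul, ih,
          ← Function.iterate_succ_apply, ← Function.iterate_succ_apply]
  have hemk : em k = c • em 0 + r := by rw [hrdef]; abel
  have hcardne : ∀ n, ((F n).card : ℂ) ≠ 0 := fun n =>
    Nat.cast_ne_zero.2 (hF.1 n).card_pos.ne'
  have hvn : ∀ n, (((F n).card : ℂ))⁻¹ • ∑ j ∈ F n, (⇑U)^[j] (em k)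
      = c • em 0 + (((F n).card : ℂ))⁻¹ • ∑ j ∈ F n, (⇑U)^[j] r := by
    intro n
    have h0 : ∀ j : ℕ, (⇑U)^[j] (em 0) = em 0 := fun j => by
      simpa using hUiter j 0
    have hterm : ∀ j : ℕ, (⇑U)^[j] (em k) = c • em 0 + (⇑U)^[j] r := by
      intro j
      rw [hemk, hlin j c (em 0) r, h0 j]
    rw [Finset.sum_congr rfl fun j _ => hterm j, Finset.sum_add_distrib, smul_add,
      Finset.sum_const]
    congr 1
    rw [← Nat.cast_smul_eq_nsmul (R := ℂ) (F n).card (c • em 0), smul_smul,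
      inv_mul_cancel₀ (hcardne n), one_smul]
  have hlim : Tendsto (fun n => (((F n).card : ℂ))⁻¹ • ∑ j ∈ F n, (⇑U)^[j] (em k)) atTop
      (nhds (c • em 0)) := by
    have h4 : Tendsto (fun _ : ℕ => c • em 0) atTop (nhds (c • em 0)) := tendsto_const_nhds
    have h5 := h4.add hB
    rw [add_zero] at h5
    exact h5.congr fun n => (hvn n).symm
  have h6 : Tendsto (fun _ : ℕ => em (-l)) atTop (nhds (em (-l))) := tendsto_const_nhds
  have hfinal := Filter.Tendsto.inner (𝕜 := ℂ) h6 hlim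
  have hval : ⟪em (-l), c • em 0⟫ = fc μ k * fc μ l := by
    rw [inner_smul_right, h_inner]
    norm_num [hc]
  rw [hval] at hfinal
  refine hfinal.congr fun n => ?_
  rw [inner_smul_right, inner_sum, one_div]
  congr 1
  refine Finset.sum_congr rfl fun j hj => ?_
  rw [hUiter j k, h_inner]
  congr 1
  ring
end

section
/- Let p be an integer with |p| ≥ 2. A Borel probability measure μ on 𝕋 is a strongly mixing T_p-invariant measure if and only if lim_{j→∞} μ̂(k p^j + l) = μ̂(k) μ̂(l) for all k, l ∈ ℤ. -/
open MeasureTheory Filter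

namespace Stmt12
open ComplexConjugate
noncomputable section

set_option linter.unusedSectionVars false

local notation "⟪" x ", " y "⟫" => (inner ℂ x y : ℂ)

lemma timesMap_measurable (q : ℤ) : Measurable (timesMap q) :=
  (continuous_zsmul q).measurable

lemma timesMap_iterate (q : ℤ) (j : ℕ) (x : Torus) :
    (timesMap q)^[j] x = (q ^ j : ℤ) • x := by
  induction j with
  | zero => simp
  | succ n ih =>
    rw [Function.iterate_succ_apply', ih]
    show q • ((q ^ n : ℤ) • x) = _
    rw [smul_smul]
    congr 1
    ring

lemma conj_fourier (n : ℤ) (x : Torus) : conj (fourier n x) = fourier (-n) x :=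
  fourier_neg.symm

lemma fourier_zsmul (k q : ℤ) (x : Torus) : fourier k (q • x) = fourier (k * q) x := by
  rw [fourier_apply, fourier_apply, smul_smul]

variable {μ : Measure Torus} [IsProbabilityMeasure μ]

lemma fc_zero : fc μ 0 = 1 := by
  unfold fc; simp

/-! ### Lp elements -/

def oneL (μ : Measure Torus) [IsProbabilityMeasure μ] : Lp ℂ 2 μ := Lp.const 2 μ 1

def fourL (μ : Measure Torus) [IsProbabilityMeasure μ] (k : ℤ) : Lp ℂ 2 μ :=
  ContinuousMap.toLp 2 μ ℂ (fourier k)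

def indL (μ : Measure Torus) [IsProbabilityMeasure μ] {A : Set Torus}
    (hA : MeasurableSet A) : Lp ℂ 2 μ :=
  indicatorConstLp 2 hA (measure_ne_top μ A) 1

lemma indL_coeFn {A : Set Torus} (hA : MeasurableSet A) :
    ⇑(indL μ hA) =ᵐ[μ] A.indicator (fun _ => (1:ℂ)) :=
  indicatorConstLp_coeFn

lemma norm_oneL : ‖oneL μ‖ = 1 := by simp [oneL, Lp.norm_const]

lemma inner_eq (F G : Lp ℂ 2 μ) : ⟪F, G⟫ = ∫ x, conj (F x) * G x ∂μ := by
  rw [L2.inner_def]; simp [RCLike.inner_apply]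
  exact integral_congr_ae (Filter.Eventually.of_forall fun x => mul_comm _ _)

lemma inner_fourL_oneL (k : ℤ) : ⟪fourL μ k, oneL μ⟫ = fc μ (-k) := by
  rw [inner_eq]
  unfold fc
  refine integral_congr_ae ?_
  filter_upwards [ContinuousMap.coeFn_toLp (p := (2 : ENNReal)) (𝕜 := ℂ) μ (fourier k),
    Lp.coeFn_const 2 μ (1 : ℂ)] with x h1 h2
  simp only [fourL, oneL] at *
  rw [h1, h2, conj_fourier]
  simp [Function.const]

lemma inner_oneL_fourL (l : ℤ) : ⟪oneL μ, fourL μ l⟫ = fc μ l := by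
  rw [inner_eq]
  unfold fc
  refine integral_congr_ae ?_
  filter_upwards [ContinuousMap.coeFn_toLp (p := (2 : ENNReal)) (𝕜 := ℂ) μ (fourier l),
    Lp.coeFn_const 2 μ (1 : ℂ)] with x h1 h2
  simp only [fourL, oneL] at *
  rw [h1, h2]
  simp [Function.const]

lemma inner_indL_oneL {A : Set Torus} (hA : MeasurableSet A) :
    ⟪indL μ hA, oneL μ⟫ = ((μ A).toReal : ℂ) := by
  rw [inner_eq, show (((μ A).toReal : ℂ)) = μ.real A • (1 : ℂ) by simp [Measure.real],
    ← integral_indicator_const (1 : ℂ) hA]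
  refine integral_congr_ae ?_
  filter_upwards [indicatorConstLp_coeFn (c := (1 : ℂ)) (hs := hA)
      (hμs := measure_ne_top μ A) (p := 2), Lp.coeFn_const 2 μ (1 : ℂ)] with x h1 h2
  simp only [indL, oneL] at *
  rw [h1, h2]
  by_cases hx : x ∈ A <;> simp [hx, Function.const]

lemma inner_oneL_indL {B : Set Torus} (hB : MeasurableSet B) :
    ⟪oneL μ, indL μ hB⟫ = ((μ B).toReal : ℂ) := by
  rw [inner_eq, show (((μ B).toReal : ℂ)) = μ.real B • (1 : ℂ) by simp [Measure.real],
    ← integral_indicator_const (1 : ℂ) hB]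
  refine integral_congr_ae ?_
  filter_upwards [indicatorConstLp_coeFn (c := (1 : ℂ)) (hs := hB)
      (hμs := measure_ne_top μ B) (p := 2), Lp.coeFn_const 2 μ (1 : ℂ)] with x h1 h2
  simp only [indL, oneL] at *
  rw [h1, h2]
  by_cases hx : x ∈ B <;> simp [hx, Function.const]

/-! ### Density lemmas -/

lemma dense_spanFour :
    Dense ((Submodule.span ℂ (Set.range (fourL μ)) : Submodule ℂ (Lp ℂ 2 μ)) :
      Set (Lp ℂ 2 μ)) := by
  have hd : Dense ((Submodule.span ℂ (Set.range (@fourier (1:ℝ))) :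
      Submodule ℂ C(Torus, ℂ)) : Set C(Torus, ℂ)) :=
    Submodule.dense_iff_topologicalClosure_eq_top.2 span_fourier_closure_eq_top
  have hrange : DenseRange (ContinuousMap.toLp (E := ℂ) 2 μ ℂ) :=
    ContinuousMap.toLp_denseRange (E := ℂ) (𝕜 := ℂ) (μ := μ) (p := 2) (by norm_num)
  have himg := hrange.dense_image (ContinuousMap.toLp 2 μ ℂ).continuous hd
  have heq : (ContinuousMap.toLp (E := ℂ) 2 μ ℂ) ''
        ((Submodule.span ℂ (Set.range (@fourier (1:ℝ)))) : Set C(Torus, ℂ))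
      = ((Submodule.span ℂ (Set.range (fourL μ)) : Submodule ℂ (Lp ℂ 2 μ)) :
        Set (Lp ℂ 2 μ)) := by
    have hmap := Submodule.map_span ((ContinuousMap.toLp (E := ℂ) 2 μ ℂ) :
        C(Torus, ℂ) →ₗ[ℂ] Lp ℂ 2 μ) (Set.range (@fourier (1:ℝ)))
    calc (ContinuousMap.toLp (E := ℂ) 2 μ ℂ) ''
          ((Submodule.span ℂ (Set.range (@fourier (1:ℝ)))) : Set C(Torus, ℂ))
        = ((Submodule.span ℂ (Set.range (@fourier (1:ℝ)))).map
            ((ContinuousMap.toLp (E := ℂ) 2 μ ℂ) : C(Torus, ℂ) →ₗ[ℂ] Lp ℂ 2 μ) :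
            Set (Lp ℂ 2 μ)) := rfl
      _ = _ := by
          rw [hmap, ← Set.range_comp]
          rfl
  rwa [heq] at himg

lemma smul_indL (c : ℂ) {A : Set Torus} (hA : MeasurableSet A) :
    indicatorConstLp 2 hA (measure_ne_top μ A) c = c • indL μ hA := by
  refine Lp.ext ?_
  filter_upwards [indicatorConstLp_coeFn (c := c) (hs := hA)
      (hμs := measure_ne_top μ A) (p := 2),
    Lp.coeFn_smul c (indL μ hA),
    indicatorConstLp_coeFn (c := (1:ℂ)) (hs := hA)
      (hμs := measure_ne_top μ A) (p := 2)] with x h1 h2 h3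
  rw [h1, h2]
  show _ = c • (indL μ hA) x
  unfold indL
  rw [h3]
  by_cases hx : x ∈ A <;> simp [hx]

lemma dense_spanInd :
    Dense ((Submodule.span ℂ {F : Lp ℂ 2 μ |
        ∃ A : Set Torus, ∃ hA : MeasurableSet A, F = indL μ hA}) : Set (Lp ℂ 2 μ)) := by
  set S := Submodule.span ℂ {F : Lp ℂ 2 μ |
    ∃ A : Set Torus, ∃ hA : MeasurableSet A, F = indL μ hA} with hs
  have key : ∀ F : Lp ℂ 2 μ, F ∈ S.topologicalClosure := by
    refine Lp.induction (by norm_num) (fun F => F ∈ S.topologicalClosure) ?_ ?_ ?_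
    · intro c s hmeas hμs
      apply S.le_topologicalClosure
      have hcoe : (Lp.simpleFunc.indicatorConst 2 hmeas hμs.ne c : Lp ℂ 2 μ)
          = indicatorConstLp 2 hmeas (measure_ne_top μ s) c :=
        Lp.simpleFunc.coe_indicatorConst hmeas hμs.ne c
      rw [hcoe, smul_indL]
      exact S.smul_mem c (Submodule.subset_span ⟨s, hmeas, rfl⟩)
    · intro f g hf hg _ h1 h2
      exact S.topologicalClosure.add_mem h1 h2
    · exact S.isClosed_topologicalClosure
  intro F
  have := key F
  rwa [← Submodule.topologicalClosure_coe]

/-! ### Measure-uniqueness via Fourier coefficients -/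

lemma cont_integrable (ν : Measure Torus) [IsFiniteMeasure ν] (f : C(Torus, ℂ)) :
    Integrable f ν :=
  f.continuous.integrable_of_hasCompactSupport (HasCompactSupport.of_compactSpace _)

lemma cont_integral_continuous (ν : Measure Torus) [IsFiniteMeasure ν] :
    Continuous (fun f : C(Torus, ℂ) => ∫ x, f x ∂ν) := by
  have heq : (fun f : C(Torus, ℂ) => ∫ x, f x ∂ν)
      = fun f => L1.integralCLM (ContinuousMap.toLp (E := ℂ) 1 ν ℂ f) := by
    funext f
    rw [← L1.integral_eq, L1.integral_eq_integral]
    exact (integral_congr_ae (ContinuousMap.coeFn_toLp (p := (1 : ENNReal)) (𝕜 := ℂ) ν f)).symm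
  rw [heq]
  exact L1.integralCLM.continuous.comp (ContinuousMap.toLp (E := ℂ) 1 ν ℂ).continuous

lemma ext_fc {μ1 μ2 : Measure Torus} [IsProbabilityMeasure μ1] [IsProbabilityMeasure μ2]
    (h : ∀ k : ℤ, fc μ1 k = fc μ2 k) : μ1 = μ2 := by
  have hC : ∀ f : C(Torus, ℂ), ∫ x, f x ∂μ1 = ∫ x, f x ∂μ2 := by
    have hd : Dense ((Submodule.span ℂ (Set.range (@fourier (1:ℝ))) :
        Submodule ℂ C(Torus, ℂ)) : Set C(Torus, ℂ)) :=
      Submodule.dense_iff_topologicalClosure_eq_top.2 span_fourier_closure_eq_top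
    have heqon : Set.EqOn (fun f : C(Torus, ℂ) => ∫ x, f x ∂μ1)
        (fun f : C(Torus, ℂ) => ∫ x, f x ∂μ2)
        ((Submodule.span ℂ (Set.range (@fourier (1:ℝ))) :
          Submodule ℂ C(Torus, ℂ)) : Set C(Torus, ℂ)) := by
      intro f hf
      induction hf using Submodule.span_induction with
      | mem g hg =>
        obtain ⟨k, rfl⟩ := hg
        exact h k
      | zero => simp
      | add a b _ _ ha hb =>
        simp only [ContinuousMap.coe_add, Pi.add_apply]
        rw [integral_add (cont_integrable μ1 a) (cont_integrable μ1 b),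
          integral_add (cont_integrable μ2 a) (cont_integrable μ2 b)]
        simp only at ha hb
        rw [ha, hb]
      | smul c a _ ha =>
        simp only [ContinuousMap.coe_smul, Pi.smul_apply, smul_eq_mul]
        rw [integral_const_mul, integral_const_mul]
        simp only at ha
        rw [ha]
    have := Continuous.ext_on hd (cont_integral_continuous μ1) (cont_integral_continuous μ2) heqon
    exact fun f => congrFun this f
  refine ext_of_forall_lintegral_eq_of_IsFiniteMeasure (fun f => ?_)
  have hgc : Continuous (fun x : Torus => ((f x : ℝ))) :=
    NNReal.continuous_coe.comp f.continuous
  have hC' := hC ⟨fun x => ((f x : ℝ) : ℂ), Complex.continuous_ofReal.comp hgc⟩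
  simp only [ContinuousMap.coe_mk] at hC'
  have he1 : ∫ x, ((f x : ℝ) : ℂ) ∂μ1 = ((∫ x, ((f x : ℝ)) ∂μ1 : ℝ) : ℂ) :=
    integral_ofReal (𝕜 := ℂ)
  have he2 : ∫ x, ((f x : ℝ) : ℂ) ∂μ2 = ((∫ x, ((f x : ℝ)) ∂μ2 : ℝ) : ℂ) :=
    integral_ofReal (𝕜 := ℂ)
  rw [he1, he2] at hC'
  have hre : ∫ x, ((f x : ℝ)) ∂μ1 = ∫ x, ((f x : ℝ)) ∂μ2 := by exact_mod_cast hC'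
  have hint1 : Integrable (fun x => ((f x : ℝ))) μ1 :=
    hgc.integrable_of_hasCompactSupport (HasCompactSupport.of_compactSpace _)
  have hint2 : Integrable (fun x => ((f x : ℝ))) μ2 :=
    hgc.integrable_of_hasCompactSupport (HasCompactSupport.of_compactSpace _)
  rw [lintegral_coe_eq_integral _ hint1, lintegral_coe_eq_integral _ hint2, hre]

lemma fc_map (q : ℤ) (k : ℤ) :
    fc (μ.map (timesMap q)) k = fc μ (k * q) := by
  unfold fc
  rw [integral_map (timesMap_measurable q).aemeasurable
    (fourier k).continuous.aestronglyMeasurable]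
  exact integral_congr_ae (Filter.Eventually.of_forall fun x => fourier_zsmul k q x)

lemma measurePreserving_of_fc {p : ℤ}
    (H : ∀ k l : ℤ, Tendsto (fun j => fc μ (k * p ^ j + l)) atTop
      (nhds (fc μ k * fc μ l))) :
    MeasurePreserving (timesMap p) μ μ := by
  have hfc : ∀ k : ℤ, fc μ (k * p) = fc μ k := by
    intro k
    have h1 := H k 0
    have h2 := H (k * p) 0
    simp only [add_zero, fc_zero, mul_one] at h1 h2
    have h3 : Tendsto (fun j => fc μ (k * p ^ (j + 1))) atTop (nhds (fc μ k)) :=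
      (tendsto_add_atTop_iff_nat 1).2 h1
    have h4 : (fun j => fc μ (k * p ^ (j + 1))) = fun j => fc μ (k * p * p ^ j) := by
      funext j; congr 1; ring
    rw [h4] at h3
    exact tendsto_nhds_unique h2 h3
  have : IsProbabilityMeasure (μ.map (timesMap p)) :=
    Measure.isProbabilityMeasure_map (timesMap_measurable p).aemeasurable
  refine ⟨timesMap_measurable p, ?_⟩
  refine ext_fc (fun k => ?_)
  rw [fc_map, hfc]

/-! ### The Koopman operator and the mixing property `GP` -/

section MP
variable {p : ℤ}

def Kop (hmp : MeasurePreserving (timesMap p) μ μ) (j : ℕ) :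
    Lp ℂ 2 μ →ₗ[ℂ] Lp ℂ 2 μ :=
  Lp.compMeasurePreservingₗ ℂ ((timesMap p)^[j]) (hmp.iterate j)

variable (hmp : MeasurePreserving (timesMap p) μ μ)

lemma Kop_coeFn (j : ℕ) (F : Lp ℂ 2 μ) :
    Kop hmp j F =ᵐ[μ] F ∘ (timesMap p)^[j] :=
  Lp.coeFn_compMeasurePreserving F (hmp.iterate j)

lemma Kop_norm (j : ℕ) (F : Lp ℂ 2 μ) : ‖Kop hmp j F‖ = ‖F‖ :=
  Lp.norm_compMeasurePreserving F (hmp.iterate j)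

lemma Kop_coeFn' (j : ℕ) (F : Lp ℂ 2 μ) (g : Torus → ℂ) (hg : ⇑F =ᵐ[μ] g) :
    ⇑(Kop hmp j F) =ᵐ[μ] fun x => g ((timesMap p)^[j] x) := by
  refine (Kop_coeFn hmp j F).trans ?_
  exact ae_eq_comp (f := (timesMap p)^[j]) (g := ⇑F) (g' := g)
    ((timesMap_measurable p).iterate j).aemeasurable
    (by rwa [(hmp.iterate j).map_eq])

/-- The key mixing property of a pair of `L²` functions. -/
def GP (F G : Lp ℂ 2 μ) : Prop :=
  Tendsto (fun j => ⟪Kop hmp j F, G⟫) atTop (nhds (⟪F, oneL μ⟫ * ⟪oneL μ, G⟫))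

variable {hmp}

lemma GP.add_left {F F' G : Lp ℂ 2 μ} (h : GP hmp F G) (h' : GP hmp F' G) :
    GP hmp (F + F') G := by
  unfold GP at *
  have heq : (fun j => ⟪Kop hmp j (F + F'), G⟫)
      = fun j => ⟪Kop hmp j F, G⟫ + ⟪Kop hmp j F', G⟫ := by
    funext j; rw [map_add, inner_add_left]
  rw [heq, show ⟪F + F', oneL μ⟫ * ⟪oneL μ, G⟫
      = ⟪F, oneL μ⟫ * ⟪oneL μ, G⟫ + ⟪F', oneL μ⟫ * ⟪oneL μ, G⟫ by
    rw [inner_add_left]; ring]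
  exact h.add h'

lemma GP.smul_left {F G : Lp ℂ 2 μ} (c : ℂ) (h : GP hmp F G) : GP hmp (c • F) G := by
  unfold GP at *
  have heq : (fun j => ⟪Kop hmp j (c • F), G⟫)
      = fun j => conj c * ⟪Kop hmp j F, G⟫ := by
    funext j; rw [LinearMap.map_smul, inner_smul_left]
  rw [heq, show ⟪c • F, oneL μ⟫ * ⟪oneL μ, G⟫
      = conj c * (⟪F, oneL μ⟫ * ⟪oneL μ, G⟫) by rw [inner_smul_left]; ring]
  exact h.const_mul _

lemma GP.zero_left {G : Lp ℂ 2 μ} : GP hmp 0 G := by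
  unfold GP
  simp only [map_zero, inner_zero_left, zero_mul]
  exact tendsto_const_nhds

lemma GP.add_right {F G G' : Lp ℂ 2 μ} (h : GP hmp F G) (h' : GP hmp F G') :
    GP hmp F (G + G') := by
  unfold GP at *
  have heq : (fun j => ⟪Kop hmp j F, G + G'⟫)
      = fun j => ⟪Kop hmp j F, G⟫ + ⟪Kop hmp j F, G'⟫ := by
    funext j; rw [inner_add_right]
  rw [heq, show ⟪F, oneL μ⟫ * ⟪oneL μ, G + G'⟫
      = ⟪F, oneL μ⟫ * ⟪oneL μ, G⟫ + ⟪F, oneL μ⟫ * ⟪oneL μ, G'⟫ by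
    rw [inner_add_right]; ring]
  exact h.add h'

lemma GP.smul_right {F G : Lp ℂ 2 μ} (c : ℂ) (h : GP hmp F G) : GP hmp F (c • G) := by
  unfold GP at *
  have heq : (fun j => ⟪Kop hmp j F, c • G⟫) = fun j => c * ⟪Kop hmp j F, G⟫ := by
    funext j; rw [inner_smul_right]
  rw [heq, show ⟪F, oneL μ⟫ * ⟪oneL μ, c • G⟫
      = c * (⟪F, oneL μ⟫ * ⟪oneL μ, G⟫) by rw [inner_smul_right]; ring]
  exact h.const_mul _

lemma GP.zero_right {F : Lp ℂ 2 μ} : GP hmp F 0 := by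
  unfold GP
  simp only [inner_zero_right, mul_zero]
  exact tendsto_const_nhds

lemma gp_span {s t : Set (Lp ℂ 2 μ)} (h : ∀ F ∈ s, ∀ G ∈ t, GP hmp F G) :
    ∀ F ∈ Submodule.span ℂ s, ∀ G ∈ Submodule.span ℂ t, GP hmp F G := by
  intro F hF
  induction hF using Submodule.span_induction with
  | mem x hx =>
    intro G hG
    induction hG using Submodule.span_induction with
    | mem y hy => exact h x hx y hy
    | zero => exact GP.zero_right
    | add a b _ _ ha hb => exact ha.add_right hb
    | smul c a _ ha => exact ha.smul_right c
  | zero => exact fun G _ => GP.zero_left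
  | add a b _ _ ha hb => exact fun G hG => (ha G hG).add_left (hb G hG)
  | smul c a _ ha => exact fun G hG => (ha G hG).smul_left c

lemma gp_dense {S T : Submodule ℂ (Lp ℂ 2 μ)}
    (hS : Dense (S : Set (Lp ℂ 2 μ))) (hT : Dense (T : Set (Lp ℂ 2 μ)))
    (h : ∀ F ∈ S, ∀ G ∈ T, GP hmp F G) (F G : Lp ℂ 2 μ) : GP hmp F G := by
  unfold GP
  rw [Metric.tendsto_atTop]
  intro ε hε
  set M : ℝ := ‖F‖ + ‖G‖ + 1 with hM
  have hM0 : 0 < M := by positivity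
  set δ : ℝ := min 1 (ε / (4 * M)) with hδ
  have hδ0 : 0 < δ := lt_min one_pos (by positivity)
  have hδ1 : δ ≤ 1 := min_le_left _ _
  have hδM : δ * M ≤ ε / 4 := by
    calc δ * M ≤ ε / (4 * M) * M := by
          exact mul_le_mul_of_nonneg_right (min_le_right _ _) hM0.le
    _ = ε / 4 := by field_simp
  obtain ⟨F', hF'S, hF'd⟩ := hS.exists_dist_lt F hδ0
  obtain ⟨G', hG'T, hG'd⟩ := hT.exists_dist_lt G hδ0
  have hFF' : ‖F - F'‖ ≤ δ := by rw [← dist_eq_norm]; exact hF'd.le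
  have hGG' : ‖G - G'‖ ≤ δ := by rw [← dist_eq_norm]; exact hG'd.le
  have hF'n : ‖F'‖ ≤ ‖F‖ + δ := by
    have := norm_sub_norm_le F' F
    rw [norm_sub_rev] at this
    linarith
  have heε : ‖F - F'‖ * ‖G‖ + ‖F'‖ * ‖G - G'‖ ≤ ε / 4 := by
    have h1 : ‖F - F'‖ * ‖G‖ ≤ δ * ‖G‖ :=
      mul_le_mul_of_nonneg_right hFF' (norm_nonneg _)
    have h2 : ‖F'‖ * ‖G - G'‖ ≤ (‖F‖ + δ) * δ :=
      mul_le_mul hF'n hGG' (norm_nonneg _) (by positivity)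
    have h3 : δ * ‖G‖ + (‖F‖ + δ) * δ ≤ δ * M := by
      rw [hM]; nlinarith [norm_nonneg F, norm_nonneg G, hδ0.le]
    calc ‖F - F'‖ * ‖G‖ + ‖F'‖ * ‖G - G'‖ ≤ δ * ‖G‖ + (‖F‖ + δ) * δ := add_le_add h1 h2
      _ ≤ δ * M := h3
      _ ≤ ε / 4 := hδM
  have hb1 : ∀ j : ℕ, ‖⟪Kop hmp j F, G⟫ - ⟪Kop hmp j F', G'⟫‖
      ≤ ‖F - F'‖ * ‖G‖ + ‖F'‖ * ‖G - G'‖ := by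
    intro j
    have hsplit : ⟪Kop hmp j F, G⟫ - ⟪Kop hmp j F', G'⟫
        = ⟪Kop hmp j (F - F'), G⟫ + ⟪Kop hmp j F', G - G'⟫ := by
      rw [map_sub, inner_sub_left, inner_sub_right]; ring
    rw [hsplit]
    calc ‖⟪Kop hmp j (F - F'), G⟫ + ⟪Kop hmp j F', G - G'⟫‖
        ≤ ‖⟪Kop hmp j (F - F'), G⟫‖ + ‖⟪Kop hmp j F', G - G'⟫‖ := norm_add_le _ _
      _ ≤ ‖Kop hmp j (F - F')‖ * ‖G‖ + ‖Kop hmp j F'‖ * ‖G - G'‖ :=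
          add_le_add (norm_inner_le_norm _ _) (norm_inner_le_norm _ _)
      _ = ‖F - F'‖ * ‖G‖ + ‖F'‖ * ‖G - G'‖ := by rw [Kop_norm, Kop_norm]
  have hb2 : ‖⟪F, oneL μ⟫ * ⟪oneL μ, G⟫ - ⟪F', oneL μ⟫ * ⟪oneL μ, G'⟫‖
      ≤ ‖F - F'‖ * ‖G‖ + ‖F'‖ * ‖G - G'‖ := by
    have hsplit : ⟪F, oneL μ⟫ * ⟪oneL μ, G⟫ - ⟪F', oneL μ⟫ * ⟪oneL μ, G'⟫
        = ⟪F - F', oneL μ⟫ * ⟪oneL μ, G⟫ + ⟪F', oneL μ⟫ * ⟪oneL μ, G - G'⟫ := by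
      rw [inner_sub_left, inner_sub_right]; ring
    rw [hsplit]
    have k1 : ‖⟪F - F', oneL μ⟫ * ⟪oneL μ, G⟫‖ ≤ ‖F - F'‖ * ‖G‖ := by
      rw [norm_mul]
      calc ‖⟪F - F', oneL μ⟫‖ * ‖⟪oneL μ, G⟫‖
          ≤ (‖F - F'‖ * ‖oneL μ‖) * (‖oneL μ‖ * ‖G‖) :=
            mul_le_mul (norm_inner_le_norm _ _) (norm_inner_le_norm _ _)
              (norm_nonneg _) (by positivity)
        _ = ‖F - F'‖ * ‖G‖ := by rw [norm_oneL]; ring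
    have k2 : ‖⟪F', oneL μ⟫ * ⟪oneL μ, G - G'⟫‖ ≤ ‖F'‖ * ‖G - G'‖ := by
      rw [norm_mul]
      calc ‖⟪F', oneL μ⟫‖ * ‖⟪oneL μ, G - G'⟫‖
          ≤ (‖F'‖ * ‖oneL μ‖) * (‖oneL μ‖ * ‖G - G'‖) :=
            mul_le_mul (norm_inner_le_norm _ _) (norm_inner_le_norm _ _)
              (norm_nonneg _) (by positivity)
        _ = ‖F'‖ * ‖G - G'‖ := by rw [norm_oneL]; ring
    calc ‖⟪F - F', oneL μ⟫ * ⟪oneL μ, G⟫ + ⟪F', oneL μ⟫ * ⟪oneL μ, G - G'⟫‖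
        ≤ ‖⟪F - F', oneL μ⟫ * ⟪oneL μ, G⟫‖ + ‖⟪F', oneL μ⟫ * ⟪oneL μ, G - G'⟫‖ :=
          norm_add_le _ _
      _ ≤ ‖F - F'‖ * ‖G‖ + ‖F'‖ * ‖G - G'‖ := add_le_add k1 k2
  obtain ⟨N, hN⟩ := Metric.tendsto_atTop.1 (h F' hF'S G' hG'T) (ε / 4) (by positivity)
  refine ⟨N, fun n hn => ?_⟩
  have hmid := hN n hn
  have htri := dist_triangle4 (⟪Kop hmp n F, G⟫) (⟪Kop hmp n F', G'⟫)
    (⟪F', oneL μ⟫ * ⟪oneL μ, G'⟫) (⟪F, oneL μ⟫ * ⟪oneL μ, G⟫)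
  have d1 : dist (⟪Kop hmp n F, G⟫) (⟪Kop hmp n F', G'⟫)
      ≤ ‖F - F'‖ * ‖G‖ + ‖F'‖ * ‖G - G'‖ := by
    rw [dist_eq_norm]; exact hb1 n
  have d3 : dist (⟪F', oneL μ⟫ * ⟪oneL μ, G'⟫) (⟪F, oneL μ⟫ * ⟪oneL μ, G⟫)
      ≤ ‖F - F'‖ * ‖G‖ + ‖F'‖ * ‖G - G'‖ := by
    rw [dist_eq_norm, norm_sub_rev]; exact hb2
  linarith

/-! ### Identifications -/

lemma inner_Kop_four (j : ℕ) (k l : ℤ) :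
    ⟪Kop hmp j (fourL μ k), fourL μ l⟫ = fc μ (-k * p ^ j + l) := by
  rw [inner_eq]
  unfold fc
  refine integral_congr_ae ?_
  have h1 : ⇑(Kop hmp j (fourL μ k)) =ᵐ[μ] fun x => fourier k ((timesMap p)^[j] x) :=
    Kop_coeFn' (hmp := hmp) j _ _
      (ContinuousMap.coeFn_toLp (p := (2 : ENNReal)) (𝕜 := ℂ) μ (fourier k))
  have h2 : ⇑(fourL μ l) =ᵐ[μ] fun x => fourier l x :=
    ContinuousMap.coeFn_toLp (p := (2 : ENNReal)) (𝕜 := ℂ) μ (fourier l)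
  filter_upwards [h1, h2] with x hx hy
  rw [hx, hy, timesMap_iterate, fourier_zsmul, conj_fourier, ← fourier_add]
  congr 2
  ring

lemma inner_Kop_ind (j : ℕ) {A B : Set Torus} (hA : MeasurableSet A)
    (hB : MeasurableSet B) :
    ⟪Kop hmp j (indL μ hA), indL μ hB⟫
      = ((μ ((timesMap p)^[j] ⁻¹' A ∩ B)).toReal : ℂ) := by
  have hS : MeasurableSet ((timesMap p)^[j] ⁻¹' A ∩ B) :=
    (((timesMap_measurable p).iterate j) hA).inter hB
  rw [inner_eq, show (((μ ((timesMap p)^[j] ⁻¹' A ∩ B)).toReal : ℂ))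
      = μ.real ((timesMap p)^[j] ⁻¹' A ∩ B) • (1 : ℂ) by simp [Measure.real],
    ← integral_indicator_const (1 : ℂ) hS]
  refine integral_congr_ae ?_
  have h1 : ⇑(Kop hmp j (indL μ hA))
      =ᵐ[μ] fun x => A.indicator (fun _ => (1:ℂ)) ((timesMap p)^[j] x) :=
    Kop_coeFn' (hmp := hmp) j _ _ (indL_coeFn hA)
  filter_upwards [h1, indL_coeFn hB] with x hx hy
  rw [hx, hy]
  by_cases h1x : (timesMap p)^[j] x ∈ A <;> by_cases h2x : x ∈ B <;>
    simp [Set.indicator_apply, h1x, h2x]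

/-! ### GP versus the concrete statements -/

lemma gp_ind_of_mixing
    (hmix : ∀ A B : Set Torus, MeasurableSet A → MeasurableSet B →
      Tendsto (fun j => μ ((timesMap p)^[j] ⁻¹' A ∩ B)) atTop (nhds (μ A * μ B)))
    {A B : Set Torus} (hA : MeasurableSet A) (hB : MeasurableSet B) :
    GP hmp (indL μ hA) (indL μ hB) := by
  unfold GP
  have h1 := hmix A B hA hB
  have h2 : Tendsto (fun j => (μ ((timesMap p)^[j] ⁻¹' A ∩ B)).toReal) atTop
      (nhds (μ A * μ B).toReal) :=
    (ENNReal.tendsto_toReal (by finiteness)).comp h1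
  have h3 := (Complex.continuous_ofReal.tendsto _).comp h2
  have hlim : ⟪indL μ hA, oneL μ⟫ * ⟪oneL μ, indL μ hB⟫
      = (((μ A * μ B).toReal : ℝ) : ℂ) := by
    rw [inner_indL_oneL, inner_oneL_indL, ENNReal.toReal_mul]
    push_cast
    ring
  rw [hlim]
  exact h3.congr (fun j => (inner_Kop_ind (hmp := hmp) j hA hB).symm)

lemma mixing_of_gp {A B : Set Torus} (hA : MeasurableSet A) (hB : MeasurableSet B)
    (h : GP hmp (indL μ hA) (indL μ hB)) :
    Tendsto (fun j => μ ((timesMap p)^[j] ⁻¹' A ∩ B)) atTop (nhds (μ A * μ B)) := by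
  unfold GP at h
  rw [inner_indL_oneL, inner_oneL_indL] at h
  have h' : Tendsto (fun j => (((μ ((timesMap p)^[j] ⁻¹' A ∩ B)).toReal : ℝ) : ℂ)) atTop
      (nhds ((((μ A * μ B).toReal : ℝ)) : ℂ)) := by
    have hcast : ((((μ A * μ B).toReal : ℝ)) : ℂ)
        = ((μ A).toReal : ℂ) * ((μ B).toReal : ℂ) := by
      rw [ENNReal.toReal_mul]; push_cast; ring
    rw [hcast]
    exact h.congr (fun j => inner_Kop_ind (hmp := hmp) j hA hB)
  have h2 : Tendsto (fun j => (μ ((timesMap p)^[j] ⁻¹' A ∩ B)).toReal) atTop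
      (nhds ((μ A * μ B).toReal)) := by
    have := (Complex.continuous_re.tendsto _).comp h'
    simpa [Function.comp_def] using this
  exact (ENNReal.tendsto_toReal_iff (fun j => measure_ne_top μ _) (by finiteness)).1 h2

lemma gp_four_pair
    (H : ∀ k l : ℤ, Tendsto (fun j => fc μ (k * p ^ j + l)) atTop
      (nhds (fc μ k * fc μ l))) (k l : ℤ) :
    GP hmp (fourL μ k) (fourL μ l) := by
  unfold GP
  rw [inner_fourL_oneL, inner_oneL_fourL]
  exact (H (-k) l).congr (fun j => (inner_Kop_four (hmp := hmp) j k l).symm)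

lemma four_of_gp (hall : ∀ F G : Lp ℂ 2 μ, GP hmp F G) (k l : ℤ) :
    Tendsto (fun j => fc μ (k * p ^ j + l)) atTop (nhds (fc μ k * fc μ l)) := by
  have h := hall (fourL μ (-k)) (fourL μ l)
  unfold GP at h
  rw [inner_fourL_oneL, inner_oneL_fourL, neg_neg] at h
  refine (h.congr (fun j => ?_))
  rw [inner_Kop_four (hmp := hmp) j (-k) l, neg_neg]

end MP
end
end Stmt12

theorem stmt12 (p : ℤ) (hp : 2 ≤ |p|) (μ : Measure Torus) [IsProbabilityMeasure μ] :
    (MeasurePreserving (timesMap p) μ μ ∧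
        ∀ A B : Set Torus, MeasurableSet A → MeasurableSet B →
          Tendsto (fun j => μ ((timesMap p)^[j] ⁻¹' A ∩ B)) atTop (nhds (μ A * μ B))) ↔
      ∀ k l : ℤ, Tendsto (fun j => fc μ (k * p ^ j + l)) atTop (nhds (fc μ k * fc μ l)) := by
  constructor
  · rintro ⟨hmp, hmix⟩
    have hbase : ∀ F ∈ {F : Lp ℂ 2 μ |
        ∃ A : Set Torus, ∃ hA : MeasurableSet A, F = Stmt12.indL μ hA},
        ∀ G ∈ {F : Lp ℂ 2 μ |
        ∃ A : Set Torus, ∃ hA : MeasurableSet A, F = Stmt12.indL μ hA},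
        Stmt12.GP hmp F G := by
      rintro F ⟨A, hA, rfl⟩ G ⟨B, hB, rfl⟩
      exact Stmt12.gp_ind_of_mixing hmix hA hB
    have hall := Stmt12.gp_dense Stmt12.dense_spanInd Stmt12.dense_spanInd
      (Stmt12.gp_span hbase)
    exact Stmt12.four_of_gp hall
  · intro H
    have hmp := Stmt12.measurePreserving_of_fc H
    refine ⟨hmp, fun A B hA hB => ?_⟩
    have hbase : ∀ F ∈ Set.range (Stmt12.fourL μ), ∀ G ∈ Set.range (Stmt12.fourL μ),
        Stmt12.GP hmp F G := by
      rintro F ⟨k, rfl⟩ G ⟨l, rfl⟩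
      exact Stmt12.gp_four_pair H k l
    have hall := Stmt12.gp_dense Stmt12.dense_spanFour Stmt12.dense_spanFour
      (Stmt12.gp_span hbase)
    exact Stmt12.mixing_of_gp hA hB (hall (Stmt12.indL μ hA) (Stmt12.indL μ hB))
end

section
/- Let p ≥ 2 be an integer and μ a strongly mixing T_p-invariant Borel probability measure on 𝕋 which is non-atomic. If there exist a nonzero integer l and infinitely many j ∈ ℕ such that μ is T_{p^j+l}-invariant, then μ̂(k) = 0 for every nonzero integer k, i.e., μ is the Lebesgue measure. -/
open MeasureTheory Filter
open scoped ENNReal NNReal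

namespace Stmt17Aux

lemma aux_integrable {E : Type*} [NormedAddCommGroup E] {μ : Measure Torus} [IsFiniteMeasure μ]
    {f : Torus → E} {C : ℝ} (hf : AEStronglyMeasurable f μ) (hC : ∀ x, ‖f x‖ ≤ C) :
    Integrable f μ :=
  (integrable_const C).mono' hf (Eventually.of_forall hC)

lemma measurable_timesMap (q : ℤ) : Measurable (timesMap q) :=
  (continuous_zsmul q).measurable

lemma timesMap_iterate (q : ℤ) (j : ℕ) (x : Torus) : (timesMap q)^[j] x = (q ^ j : ℤ) • x := by
  induction j with
  | zero => simp
  | succ n ih =>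
      rw [Function.iterate_succ_apply', ih]
      show q • ((q ^ n : ℤ) • x) = _
      rw [smul_smul, ← pow_succ']

lemma fourier_timesMap_pow (k q : ℤ) (j : ℕ) (x : Torus) :
    fourier k ((timesMap q)^[j] x) = fourier (k * q ^ j) x := by
  rw [timesMap_iterate, fourier_apply, fourier_apply, smul_smul]

lemma norm_fourier_le (k : ℤ) (x : Torus) : ‖fourier k x‖ ≤ 1 := by
  rw [fourier_apply]
  exact le_of_eq (by rw [Circle.norm_coe])

lemma fc_map_eq {μ : Measure Torus} (q k : ℤ) (h : Measure.map (timesMap q) μ = μ) :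
    fc μ k = fc μ (k * q) := by
  conv_lhs => rw [fc, ← h]
  rw [integral_map (measurable_timesMap q).aemeasurable
    (Continuous.aestronglyMeasurable (map_continuous (fourier k)))]
  rw [fc]
  congr 1
  funext x
  show fourier k (q • x) = _
  rw [fourier_apply, fourier_apply, smul_smul]

section Mixing

variable {μ : Measure Torus} [IsProbabilityMeasure μ] {p : ℤ}

lemma mix_indicator
    (hsm : ∀ A B : Set Torus, MeasurableSet A → MeasurableSet B →
      Tendsto (fun j => μ ((timesMap p)^[j] ⁻¹' A ∩ B)) atTop (nhds (μ A * μ B)))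
    {A B : Set Torus} (hA : MeasurableSet A) (hB : MeasurableSet B) (c d : ℂ) :
    Tendsto (fun j => ∫ x, A.indicator (fun _ => c) ((timesMap p)^[j] x) *
        B.indicator (fun _ => d) x ∂μ) atTop
      (nhds ((∫ x, A.indicator (fun _ => c) x ∂μ) * ∫ x, B.indicator (fun _ => d) x ∂μ)) := by
  have hTm : ∀ j : ℕ, Measurable ((timesMap p)^[j]) :=
    fun j => (measurable_timesMap p).iterate j
  have key : ∀ j : ℕ, (fun x => A.indicator (fun _ => c) ((timesMap p)^[j] x) *
      B.indicator (fun _ => d) x) = ((timesMap p)^[j] ⁻¹' A ∩ B).indicator (fun _ => c * d) := by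
    intro j; funext x
    by_cases h1 : (timesMap p)^[j] x ∈ A <;> by_cases h2 : x ∈ B <;>
      simp [Set.indicator_apply, Set.mem_preimage, h1, h2]
  simp_rw [key]
  rw [integral_indicator_const c hA, integral_indicator_const d hB]
  have h1 : ∀ j : ℕ, ∫ x, ((timesMap p)^[j] ⁻¹' A ∩ B).indicator (fun _ => c * d) x ∂μ
      = (μ ((timesMap p)^[j] ⁻¹' A ∩ B)).toReal • (c * d) := fun j =>
    integral_indicator_const _ ((hTm j hA).inter hB)
  simp_rw [h1, Complex.real_smul]
  have hne : μ A * μ B ≠ ⊤ := ENNReal.mul_ne_top (measure_ne_top μ A) (measure_ne_top μ B)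
  have h2 : Tendsto (fun j : ℕ => (μ ((timesMap p)^[j] ⁻¹' A ∩ B)).toReal) atTop
      (nhds ((μ A * μ B)).toReal) := (ENNReal.tendsto_toReal hne).comp (hsm A B hA hB)
  have h3 := ((Complex.continuous_ofReal.tendsto _).comp h2).mul_const (c * d)
  have h4 : ((μ A).toReal : ℂ) * c * (((μ B).toReal : ℂ) * d)
      = (((μ A * μ B).toReal : ℂ)) * (c * d) := by
    rw [ENNReal.toReal_mul]; push_cast; ring
  rw [measureReal_def, measureReal_def, h4]
  exact h3

lemma mix_piece
    (hsm : ∀ A B : Set Torus, MeasurableSet A → MeasurableSet B →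
      Tendsto (fun j => μ ((timesMap p)^[j] ⁻¹' A ∩ B)) atTop (nhds (μ A * μ B)))
    {s : Set Torus} (hs : MeasurableSet s) (c : ℂ) (g : SimpleFunc Torus ℂ) :
    Tendsto (fun j => ∫ x, (SimpleFunc.piecewise s hs (SimpleFunc.const Torus c)
        (SimpleFunc.const Torus 0)) ((timesMap p)^[j] x) * g x ∂μ) atTop
      (nhds ((∫ x, (SimpleFunc.piecewise s hs (SimpleFunc.const Torus c)
        (SimpleFunc.const Torus 0)) x ∂μ) * ∫ x, g x ∂μ)) := by
  have hTm : ∀ j : ℕ, Measurable ((timesMap p)^[j]) :=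
    fun j => (measurable_timesMap p).iterate j
  have hint : ∀ (u v : SimpleFunc Torus ℂ) (j : ℕ),
      Integrable (fun x => u ((timesMap p)^[j] x) * v x) μ := by
    intro u v j
    have he : (fun x => u ((timesMap p)^[j] x) * v x)
        = ⇑((u.comp ((timesMap p)^[j]) (hTm j)) * v) := by
      funext x
      simp [SimpleFunc.coe_mul, SimpleFunc.coe_comp, Function.comp]
    rw [he]
    exact SimpleFunc.integrable_of_isFiniteMeasure _
  have hco : ∀ (x : Torus),
      (SimpleFunc.piecewise s hs (SimpleFunc.const Torus c) (SimpleFunc.const Torus 0)) x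
        = s.indicator (fun _ => c) x := by
    intro x
    by_cases hx : x ∈ s <;> simp [hx]
  set f0 := SimpleFunc.piecewise s hs (SimpleFunc.const Torus c) (SimpleFunc.const Torus 0)
    with hf0
  induction g using MeasureTheory.SimpleFunc.induction with
  | @const d u ht =>
      have hco' : ∀ (x : Torus),
          (SimpleFunc.piecewise u ht (SimpleFunc.const Torus d) (SimpleFunc.const Torus 0)) x
            = Set.indicator u (fun _ => d) x := by
        intro x
        by_cases hx : x ∈ u <;> simp [hx]
      simp_rw [hco, hco']
      exact mix_indicator hsm hs ht c d
  | @add g₁ g₂ hdisj ih1 ih2 =>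
      have e1 : ∀ j : ℕ, ∫ x, f0 ((timesMap p)^[j] x) * (g₁ + g₂) x ∂μ
          = (∫ x, f0 ((timesMap p)^[j] x) * g₁ x ∂μ)
            + ∫ x, f0 ((timesMap p)^[j] x) * g₂ x ∂μ := by
        intro j
        simp_rw [SimpleFunc.coe_add, Pi.add_apply, mul_add]
        exact integral_add (hint _ _ j) (hint _ _ j)
      have e2 : ∫ x, (g₁ + g₂) x ∂μ = (∫ x, g₁ x ∂μ) + ∫ x, g₂ x ∂μ := by
        simp_rw [SimpleFunc.coe_add, Pi.add_apply]
        exact integral_add g₁.integrable_of_isFiniteMeasure g₂.integrable_of_isFiniteMeasure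
      simp_rw [e1, e2, mul_add]
      exact ih1.add ih2

lemma mix_simple
    (hsm : ∀ A B : Set Torus, MeasurableSet A → MeasurableSet B →
      Tendsto (fun j => μ ((timesMap p)^[j] ⁻¹' A ∩ B)) atTop (nhds (μ A * μ B)))
    (f g : SimpleFunc Torus ℂ) :
    Tendsto (fun j => ∫ x, f ((timesMap p)^[j] x) * g x ∂μ) atTop
      (nhds ((∫ x, f x ∂μ) * ∫ x, g x ∂μ)) := by
  have hTm : ∀ j : ℕ, Measurable ((timesMap p)^[j]) :=
    fun j => (measurable_timesMap p).iterate j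
  have hint : ∀ (u v : SimpleFunc Torus ℂ) (j : ℕ),
      Integrable (fun x => u ((timesMap p)^[j] x) * v x) μ := by
    intro u v j
    have he : (fun x => u ((timesMap p)^[j] x) * v x)
        = ⇑((u.comp ((timesMap p)^[j]) (hTm j)) * v) := by
      funext x
      simp [SimpleFunc.coe_mul, SimpleFunc.coe_comp, Function.comp]
    rw [he]
    exact SimpleFunc.integrable_of_isFiniteMeasure _
  induction f using MeasureTheory.SimpleFunc.induction with
  | const c hs => exact mix_piece hsm hs c g
  | @add f₁ f₂ hdisj ih1 ih2 =>
      have e1 : ∀ j : ℕ, ∫ x, (f₁ + f₂) ((timesMap p)^[j] x) * g x ∂μ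
          = (∫ x, f₁ ((timesMap p)^[j] x) * g x ∂μ)
            + ∫ x, f₂ ((timesMap p)^[j] x) * g x ∂μ := by
        intro j
        simp_rw [SimpleFunc.coe_add, Pi.add_apply, add_mul]
        exact integral_add (hint _ _ j) (hint _ _ j)
      have e2 : ∫ x, (f₁ + f₂) x ∂μ = (∫ x, f₁ x ∂μ) + ∫ x, f₂ x ∂μ := by
        simp_rw [SimpleFunc.coe_add, Pi.add_apply]
        exact integral_add f₁.integrable_of_isFiniteMeasure f₂.integrable_of_isFiniteMeasure
      simp_rw [e1, e2, add_mul]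
      exact ih1.add ih2

lemma mix_fun (hinv : MeasurePreserving (timesMap p) μ μ)
    (hsm : ∀ A B : Set Torus, MeasurableSet A → MeasurableSet B →
      Tendsto (fun j => μ ((timesMap p)^[j] ⁻¹' A ∩ B)) atTop (nhds (μ A * μ B)))
    {f g : Torus → ℂ} (hf : Measurable f) (hg : Measurable g)
    (hf1 : ∀ x, ‖f x‖ ≤ 1) (hg1 : ∀ x, ‖g x‖ ≤ 1) :
    Tendsto (fun j => ∫ x, f ((timesMap p)^[j] x) * g x ∂μ) atTop
      (nhds ((∫ x, f x ∂μ) * ∫ x, g x ∂μ)) := by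
  have hTm : ∀ j : ℕ, Measurable ((timesMap p)^[j]) :=
    fun j => (measurable_timesMap p).iterate j
  have hTpres : ∀ j : ℕ, Measure.map ((timesMap p)^[j]) μ = μ :=
    fun j => (hinv.iterate j).map_eq
  -- L¹ approximation by simple functions with values in the unit ball
  have approx : ∀ (h : Torus → ℂ), Measurable h → (∀ x, ‖h x‖ ≤ 1) → ∀ ε : ℝ, 0 < ε →
      ∃ s : SimpleFunc Torus ℂ, (∀ x, ‖s x‖ ≤ 1) ∧ ∫ x, ‖h x - s x‖ ∂μ ≤ ε := by
    intro h hm h1 ε hε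
    have hmem : ∀ x, h x ∈ Metric.closedBall (0 : ℂ) 1 := fun x => by
      simpa [Metric.mem_closedBall, dist_zero_right] using h1 x
    have h₀ : (0 : ℂ) ∈ Metric.closedBall (0 : ℂ) 1 := by simp
    have hintg : Integrable h μ := aux_integrable hm.aestronglyMeasurable h1
    have hfi : HasFiniteIntegral (fun x => h x - 0) μ := by
      simpa using hintg.hasFiniteIntegral
    have htend := SimpleFunc.tendsto_approxOn_L1_enorm hm h₀
      (Eventually.of_forall fun x => subset_closure (hmem x)) hfi
    have hpos : (0:ℝ≥0∞) < ENNReal.ofReal ε := ENNReal.ofReal_pos.2 hε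
    have hev := htend.eventually_lt_const hpos
    obtain ⟨n, hn⟩ := hev.exists
    set s := SimpleFunc.approxOn h hm (Metric.closedBall (0:ℂ) 1) 0 h₀ n with hs
    refine ⟨s, fun x => by
      have := SimpleFunc.approxOn_mem hm h₀ n x
      simpa [Metric.mem_closedBall, dist_zero_right] using this, ?_⟩
    have hintd : Integrable (fun x => h x - s x) μ :=
      hintg.sub (SimpleFunc.integrable_of_isFiniteMeasure _)
    have heq : ENNReal.ofReal (∫ x, ‖h x - s x‖ ∂μ) = ∫⁻ x, ‖h x - s x‖ₑ ∂μ :=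
      ofReal_integral_norm_eq_lintegral_enorm hintd
    have hsym : (∫⁻ x, ‖h x - s x‖ₑ ∂μ) = ∫⁻ x, ‖s x - h x‖ₑ ∂μ := by
      congr 1; funext x; rw [← neg_sub, enorm_neg]
    have hlt : ENNReal.ofReal (∫ x, ‖h x - s x‖ ∂μ) ≤ ENNReal.ofReal ε := by
      rw [heq, hsym]; exact hn.le
    have hnn : 0 ≤ ∫ x, ‖h x - s x‖ ∂μ := integral_nonneg fun x => norm_nonneg _
    rwa [ENNReal.ofReal_le_ofReal_iff hε.le] at hlt
  -- ε-argument
  rw [Metric.tendsto_atTop]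
  intro ε hε
  obtain ⟨s, hs1, hsL⟩ := approx f hf hf1 (ε/6) (by positivity)
  obtain ⟨t, ht1, htL⟩ := approx g hg hg1 (ε/6) (by positivity)
  obtain ⟨N, hN⟩ := (Metric.tendsto_atTop.1 (mix_simple hsm s t)) (ε/6) (by positivity)
  refine ⟨N, fun j hj => ?_⟩
  have hsm' : Measurable (⇑s : Torus → ℂ) := s.measurable
  have htm' : Measurable (⇑t : Torus → ℂ) := t.measurable
  -- transfer of L¹ distance through the iterate
  have hcompL : ∫ x, ‖f ((timesMap p)^[j] x) - s ((timesMap p)^[j] x)‖ ∂μ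
      = ∫ x, ‖f x - s x‖ ∂μ := by
    have hmeas : AEStronglyMeasurable (fun x => ‖f x - s x‖)
        (Measure.map ((timesMap p)^[j]) μ) := by
      rw [hTpres j]
      exact ((hf.sub hsm').norm).aestronglyMeasurable
    calc ∫ x, ‖f ((timesMap p)^[j] x) - s ((timesMap p)^[j] x)‖ ∂μ
        = ∫ x, ‖f x - s x‖ ∂(Measure.map ((timesMap p)^[j]) μ) :=
          (integral_map (hTm j).aemeasurable hmeas).symm
      _ = ∫ x, ‖f x - s x‖ ∂μ := by rw [hTpres j]
  -- integrability of all products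
  have hprodbound : ∀ (u v : Torus → ℂ), (∀ x, ‖u x‖ ≤ 1) → (∀ x, ‖v x‖ ≤ 1) →
      ∀ x, ‖u x * v x‖ ≤ 1 := by
    intro u v hu hv x
    rw [norm_mul]
    calc ‖u x‖ * ‖v x‖ ≤ 1 * 1 := by
          exact mul_le_mul (hu x) (hv x) (norm_nonneg _) zero_le_one
      _ = 1 := by ring
  have hi1 : Integrable (fun x => f ((timesMap p)^[j] x) * g x) μ :=
    aux_integrable (((hf.comp (hTm j)).mul hg)).aestronglyMeasurable
      (hprodbound _ _ (fun x => hf1 _) hg1)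
  have hi2 : Integrable (fun x => s ((timesMap p)^[j] x) * t x) μ :=
    aux_integrable (((hsm'.comp (hTm j)).mul htm')).aestronglyMeasurable
      (hprodbound _ _ (fun x => hs1 _) ht1)
  -- the termwise bound
  have hptw : ∀ x : Torus, ‖f ((timesMap p)^[j] x) * g x - s ((timesMap p)^[j] x) * t x‖
      ≤ ‖f ((timesMap p)^[j] x) - s ((timesMap p)^[j] x)‖ + ‖g x - t x‖ := by
    intro x
    set a := f ((timesMap p)^[j] x); set b := g x
    set c := s ((timesMap p)^[j] x); set d := t x
    have he : a * b - c * d = (a - c) * b + c * (b - d) := by ring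
    calc ‖a * b - c * d‖ = ‖(a - c) * b + c * (b - d)‖ := by rw [he]
      _ ≤ ‖(a - c) * b‖ + ‖c * (b - d)‖ := norm_add_le _ _
      _ = ‖a - c‖ * ‖b‖ + ‖c‖ * ‖b - d‖ := by rw [norm_mul, norm_mul]
      _ ≤ ‖a - c‖ * 1 + 1 * ‖b - d‖ := by
          gcongr
          · exact hg1 x
          · exact hs1 _
      _ = ‖a - c‖ + ‖b - d‖ := by ring
  have hnormint : ∀ (u : Torus → ℂ), Measurable u → (∀ x, ‖u x‖ ≤ 2) →
      Integrable (fun x => ‖u x‖) μ := by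
    intro u hu hub
    exact aux_integrable (hu.norm).aestronglyMeasurable
      (fun x => by simpa [Real.norm_eq_abs, abs_of_nonneg (norm_nonneg (u x))] using hub x)
  have hfs2 : ∀ x, ‖f ((timesMap p)^[j] x) - s ((timesMap p)^[j] x)‖ ≤ 2 := fun x =>
    (norm_sub_le _ _).trans (by linarith [hf1 ((timesMap p)^[j] x), hs1 ((timesMap p)^[j] x)])
  have hgt2 : ∀ x, ‖g x - t x‖ ≤ 2 := fun x =>
    (norm_sub_le _ _).trans (by linarith [hg1 x, ht1 x])
  have hIfs : Integrable (fun x => ‖f ((timesMap p)^[j] x) - s ((timesMap p)^[j] x)‖) μ :=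
    hnormint _ ((hf.comp (hTm j)).sub (hsm'.comp (hTm j))) hfs2
  have hIgt : Integrable (fun x => ‖g x - t x‖) μ := hnormint _ (hg.sub htm') hgt2
  -- first difference bound
  have hd1 : ‖(∫ x, f ((timesMap p)^[j] x) * g x ∂μ)
      - ∫ x, s ((timesMap p)^[j] x) * t x ∂μ‖ ≤ ε/6 + ε/6 := by
    rw [← integral_sub hi1 hi2]
    calc ‖∫ x, (f ((timesMap p)^[j] x) * g x - s ((timesMap p)^[j] x) * t x) ∂μ‖
        ≤ ∫ x, ‖f ((timesMap p)^[j] x) * g x - s ((timesMap p)^[j] x) * t x‖ ∂μ :=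
          norm_integral_le_integral_norm _
      _ ≤ ∫ x, (‖f ((timesMap p)^[j] x) - s ((timesMap p)^[j] x)‖ + ‖g x - t x‖) ∂μ := by
          refine integral_mono ?_ (hIfs.add hIgt) hptw
          exact (hi1.sub hi2).norm
      _ = (∫ x, ‖f ((timesMap p)^[j] x) - s ((timesMap p)^[j] x)‖ ∂μ)
            + ∫ x, ‖g x - t x‖ ∂μ := integral_add hIfs hIgt
      _ ≤ ε/6 + ε/6 := by
          rw [hcompL]
          exact add_le_add hsL htL
  -- bounds on integrals
  have hnormI : ∀ (u : Torus → ℂ), Measurable u → (∀ x, ‖u x‖ ≤ 1) → ‖∫ x, u x ∂μ‖ ≤ 1 := by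
    intro u hu hub
    calc ‖∫ x, u x ∂μ‖ ≤ 1 * (μ Set.univ).toReal :=
          norm_integral_le_of_norm_le_const (Eventually.of_forall hub)
      _ = 1 := by simp
  have hIf1 : ‖∫ x, f x ∂μ‖ ≤ 1 := hnormI f hf hf1
  have hIt1 : ‖∫ x, t x ∂μ‖ ≤ 1 := hnormI t htm' ht1
  have hIfs' : ‖(∫ x, f x ∂μ) - ∫ x, s x ∂μ‖ ≤ ε/6 := by
    rw [← integral_sub (aux_integrable hf.aestronglyMeasurable hf1)
      (SimpleFunc.integrable_of_isFiniteMeasure s)]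
    calc ‖∫ x, (f x - s x) ∂μ‖ ≤ ∫ x, ‖f x - s x‖ ∂μ := norm_integral_le_integral_norm _
      _ ≤ ε/6 := hsL
  have hIgt' : ‖(∫ x, g x ∂μ) - ∫ x, t x ∂μ‖ ≤ ε/6 := by
    rw [← integral_sub (aux_integrable hg.aestronglyMeasurable hg1)
      (SimpleFunc.integrable_of_isFiniteMeasure t)]
    calc ‖∫ x, (g x - t x) ∂μ‖ ≤ ∫ x, ‖g x - t x‖ ∂μ := norm_integral_le_integral_norm _
      _ ≤ ε/6 := htL
  -- second difference bound
  have hd2 : ‖((∫ x, s x ∂μ) * ∫ x, t x ∂μ) - ((∫ x, f x ∂μ) * ∫ x, g x ∂μ)‖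
      ≤ ε/6 + ε/6 := by
    have he : ((∫ x, s x ∂μ) * ∫ x, t x ∂μ) - ((∫ x, f x ∂μ) * ∫ x, g x ∂μ)
        = ((∫ x, s x ∂μ) - ∫ x, f x ∂μ) * (∫ x, t x ∂μ)
          + (∫ x, f x ∂μ) * ((∫ x, t x ∂μ) - ∫ x, g x ∂μ) := by ring
    rw [he]
    calc ‖_ + _‖ ≤ ‖((∫ x, s x ∂μ) - ∫ x, f x ∂μ) * (∫ x, t x ∂μ)‖
          + ‖(∫ x, f x ∂μ) * ((∫ x, t x ∂μ) - ∫ x, g x ∂μ)‖ := norm_add_le _ _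
      _ = ‖(∫ x, s x ∂μ) - ∫ x, f x ∂μ‖ * ‖∫ x, t x ∂μ‖
          + ‖∫ x, f x ∂μ‖ * ‖(∫ x, t x ∂μ) - ∫ x, g x ∂μ‖ := by rw [norm_mul, norm_mul]
      _ ≤ (ε/6) * 1 + 1 * (ε/6) := by
          have h1 : ‖(∫ x, s x ∂μ) - ∫ x, f x ∂μ‖ ≤ ε/6 := by
            rw [norm_sub_rev]; exact hIfs'
          have h2 : ‖(∫ x, t x ∂μ) - ∫ x, g x ∂μ‖ ≤ ε/6 := by
            rw [norm_sub_rev]; exact hIgt'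
          exact add_le_add (mul_le_mul h1 hIt1 (norm_nonneg _) (by positivity))
            (mul_le_mul hIf1 h2 (norm_nonneg _) zero_le_one)
      _ = ε/6 + ε/6 := by ring
  -- conclusion
  have htri := dist_triangle4 (∫ x, f ((timesMap p)^[j] x) * g x ∂μ)
    (∫ x, s ((timesMap p)^[j] x) * t x ∂μ)
    ((∫ x, s x ∂μ) * ∫ x, t x ∂μ)
    ((∫ x, f x ∂μ) * ∫ x, g x ∂μ)
  have hmid := hN j hj
  rw [dist_eq_norm] at hmid
  rw [dist_eq_norm, dist_eq_norm, dist_eq_norm, dist_eq_norm] at htri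
  rw [dist_eq_norm]
  have hd2' : ‖((∫ x, s x ∂μ) * ∫ x, t x ∂μ) - (∫ x, f x ∂μ) * ∫ x, g x ∂μ‖
      ≤ ε/6 + ε/6 := hd2
  linarith

end Mixing

lemma fc_ne_one {μ : Measure Torus} [IsProbabilityMeasure μ] [NullSingletonClass μ] {m : ℤ}
    (hm : m ≠ 0) : fc μ m ≠ 1 := by
  intro hfc
  have hint : Integrable (fun x => (fourier m x : ℂ)) μ :=
    aux_integrable (map_continuous (fourier m)).measurable.aestronglyMeasurable
      (norm_fourier_le m)
  -- the real part argument
  have hre0 : ∫ x, (1 - (fourier m x).re) ∂μ = 0 := by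
    have h1 : ∫ x, ((fourier m x).re) ∂μ = (fc μ m).re := by
      have := integral_re (μ := μ) hint
      simpa [RCLike.re_to_complex, fc] using this
    have h2 : ∫ x, (1 - (fourier m x).re) ∂μ
        = (∫ _x, (1:ℝ) ∂μ) - ∫ x, ((fourier m x).re) ∂μ := by
      refine integral_sub (integrable_const 1) ?_
      refine aux_integrable (C := 1) (Complex.continuous_re.comp
        (map_continuous (fourier m))).measurable.aestronglyMeasurable (fun x => ?_)
      rw [Real.norm_eq_abs]
      calc |(fourier m x).re| ≤ ‖(fourier m x)‖ := Complex.abs_re_le_norm _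
        _ = 1 := by rw [fourier_apply]; exact Circle.norm_coe _
    rw [h2, h1, hfc]
    simp
  have hnonneg : 0 ≤ fun x : Torus => (1 - (fourier m x).re) := by
    intro x
    have h1 := Complex.re_le_norm (fourier m x)
    have h2 : ‖(fourier m x)‖ = 1 := by
      rw [fourier_apply]; exact Circle.norm_coe _
    simp only [Pi.zero_apply]
    linarith
  have hintre : Integrable (fun x : Torus => (1 - (fourier m x).re)) μ := by
    refine aux_integrable (C := 2) ?_ ?_
    · exact (continuous_const.sub (Complex.continuous_re.comp
        (map_continuous (fourier m)))).measurable.aestronglyMeasurable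
    · intro x
      have h1 := Complex.abs_re_le_norm (fourier m x)
      have h2 : ‖(fourier m x)‖ = 1 := by
        rw [fourier_apply]; exact Circle.norm_coe _
      rw [h2] at h1
      have h4 := abs_le.1 h1
      rw [Real.norm_eq_abs]
      exact abs_le.2 ⟨by linarith [h4.2], by linarith [h4.1]⟩
  have hae := (integral_eq_zero_iff_of_nonneg hnonneg hintre).1 hre0
  -- a.e. x, fourier m x = 1, hence m • x = 0
  have haeS : ∀ᵐ x ∂μ, m • x = (0 : Torus) := by
    filter_upwards [hae] with x hx
    have hre1 : (fourier m x).re = 1 := by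
      have : (1:ℝ) - (fourier m x).re = 0 := hx
      linarith
    have habs : ‖(fourier m x)‖ = 1 := by
      rw [fourier_apply, Circle.norm_coe]
    have him : (fourier m x).im = 0 := by
      have h1 : Complex.normSq (fourier m x) = 1 := by
        have := Complex.sq_norm (fourier m x)
        rw [habs] at this
        simpa using this.symm
      have h2 := Complex.normSq_apply (fourier m x)
      rw [hre1] at h2
      nlinarith [h1, h2]
    have hone : (fourier m x : ℂ) = 1 := by
      apply Complex.ext
      · rw [hre1]; exact Complex.one_re.symm
      · rw [him]; exact Complex.one_im.symm
    have hcirc : AddCircle.toCircle ((m • x : Torus)) = 1 := by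
      rw [fourier_apply] at hone
      exact Circle.coe_eq_one.1 hone
    have hzero : AddCircle.toCircle ((0 : Torus)) = 1 := by
      have h0 : (fourier m (0 : Torus) : ℂ) = 1 := fourier_eval_zero m
      rw [fourier_apply, smul_zero] at h0
      exact Circle.coe_eq_one.1 h0
    have := AddCircle.injective_toCircle (one_ne_zero : (1:ℝ) ≠ 0)
      (hcirc.trans hzero.symm)
    exact this
  -- the torsion set is countable
  set S : Set Torus := {x | m • x = 0} with hS
  have hSsub : S ⊆ Set.range (fun n : ℤ => (((n : ℝ) / (m : ℝ) : ℝ) : Torus)) := by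
    intro x hx
    induction x using QuotientAddGroup.induction_on with
    | H t =>
        have hx' : ((m • t : ℝ) : Torus) = 0 := by
          rw [QuotientAddGroup.mk_zsmul]
          exact hx
        obtain ⟨n, hn⟩ := (AddCircle.coe_eq_zero_iff (1:ℝ)).1 hx'
        refine ⟨n, ?_⟩
        have hmne : (m : ℝ) ≠ 0 := Int.cast_ne_zero.2 hm
        have : (n : ℝ) / (m : ℝ) = t := by
          rw [zsmul_eq_mul, mul_one] at hn
          rw [zsmul_eq_mul] at hn
          field_simp
          linarith [hn]
        exact congrArg (fun r : ℝ => (r : Torus)) this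
  have hμSc : μ Sᶜ = 0 := by
    have : {x : Torus | ¬ m • x = 0} = Sᶜ := rfl
    rw [← this]
    exact ae_iff.1 haeS
  have hμS : μ S = 0 :=
    measure_mono_null hSsub ((Set.countable_range _).measure_zero μ)
  have : (1 : ℝ≥0∞) ≤ 0 := by
    calc (1 : ℝ≥0∞) = μ Set.univ := (measure_univ (μ := μ)).symm
      _ = μ (S ∪ Sᶜ) := by rw [Set.union_compl_self]
      _ ≤ μ S + μ Sᶜ := measure_union_le _ _
      _ = 0 := by rw [hμS, hμSc, add_zero]
  simp at this

lemma volume_prob : IsProbabilityMeasure (volume : Measure Torus) := by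
  constructor
  rw [AddCircle.measure_univ]
  simp

lemma volume_fourier {k : ℤ} (hk : k ≠ 0) : ∫ x : Torus, fourier k x ∂(volume) = 0 := by
  have h := integral_add_right_eq_self (μ := (volume : Measure Torus))
    (fun x => (fourier k x : ℂ)) ((((1:ℝ) / 2 / (k : ℝ)) : ℝ) : Torus)
  have h2 : ∀ x : Torus, (fourier k (x + ((((1:ℝ) / 2 / (k : ℝ)) : ℝ) : Torus)) : ℂ)
      = -(fourier k x) := fun x => fourier_add_half_inv_index hk one_pos x
  simp_rw [h2] at h
  rw [integral_neg] at h
  linear_combination (-1/2 : ℂ) * h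

lemma eq_volume {μ : Measure Torus} [IsProbabilityMeasure μ]
    (h : ∀ k : ℤ, k ≠ 0 → fc μ k = 0) : μ = volume := by
  haveI : IsProbabilityMeasure (volume : Measure Torus) := volume_prob
  have hint : ∀ (ν : Measure Torus), IsFiniteMeasure ν → ∀ (f : C(Torus, ℂ)),
      Integrable (⇑f) ν := by
    intro ν hν f
    exact aux_integrable (map_continuous f).measurable.aestronglyMeasurable
      (fun x => f.norm_coe_le_norm x)
  have hcont : ∀ (ν : Measure Torus), IsProbabilityMeasure ν →
      Continuous (fun f : C(Torus, ℂ) => ∫ x, f x ∂ν) := by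
    intro ν hν
    refine (LipschitzWith.of_dist_le_mul (K := 1) fun f g => ?_).continuous
    have hb : ‖(∫ x, f x ∂ν) - ∫ x, g x ∂ν‖ ≤ dist f g := by
      rw [← integral_sub (hint ν inferInstance f) (hint ν inferInstance g)]
      calc ‖∫ x, (f x - g x) ∂ν‖ ≤ dist f g * (ν Set.univ).toReal :=
            norm_integral_le_of_norm_le_const (Eventually.of_forall fun x => by
              rw [← dist_eq_norm]; exact ContinuousMap.dist_apply_le_dist x)
        _ = dist f g := by simp
    rw [dist_eq_norm]
    simpa using hb
  -- the submodule of functions with equal integrals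
  set W : Submodule ℂ C(Torus, ℂ) :=
    { carrier := {f | ∫ x, f x ∂μ = ∫ x, f x ∂(volume : Measure Torus)}
      add_mem' := by
        intro f g hf hg
        simp only [Set.mem_setOf_eq, ContinuousMap.coe_add, Pi.add_apply] at *
        rw [integral_add (hint μ inferInstance f) (hint μ inferInstance g),
          integral_add (hint volume inferInstance f) (hint volume inferInstance g), hf, hg]
      zero_mem' := by simp
      smul_mem' := by
        intro c f hf
        simp only [Set.mem_setOf_eq, ContinuousMap.coe_smul, Pi.smul_apply] at *
        rw [integral_smul, integral_smul, hf] } with hW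
  have hWclosed : IsClosed (W : Set C(Torus, ℂ)) :=
    isClosed_eq (hcont μ inferInstance) (hcont volume inferInstance)
  have hgen : Set.range (@fourier 1) ⊆ (W : Set C(Torus, ℂ)) := by
    rintro _ ⟨k, rfl⟩
    show ∫ x, fourier k x ∂μ = ∫ x, fourier k x ∂(volume : Measure Torus)
    by_cases hk : k = 0
    · subst hk
      have he : ∀ (ν : Measure Torus), IsProbabilityMeasure ν →
          ∫ x : Torus, (fourier 0 x : ℂ) ∂ν = 1 := by
        intro ν hν
        have : ∀ x : Torus, (fourier 0 x : ℂ) = 1 := fun x => fourier_zero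
        simp_rw [this]
        simp
      rw [he μ inferInstance, he volume inferInstance]
    · rw [show ∫ x, fourier k x ∂μ = fc μ k from rfl, h k hk, volume_fourier hk]
  have hspan : (Submodule.span ℂ (Set.range (@fourier 1)) : Set C(Torus, ℂ))
      ⊆ (W : Set C(Torus, ℂ)) := Submodule.span_le.2 hgen
  have htop : ∀ f : C(Torus, ℂ), ∫ x, f x ∂μ = ∫ x, f x ∂(volume : Measure Torus) := by
    intro f
    have hmem : f ∈ (Submodule.span ℂ (Set.range (@fourier 1))).topologicalClosure := by
      rw [span_fourier_closure_eq_top]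
      trivial
    have : f ∈ closure ((Submodule.span ℂ (Set.range (@fourier 1))) : Set C(Torus, ℂ)) := by
      rw [← Submodule.topologicalClosure_coe]
      exact hmem
    exact closure_minimal hspan hWclosed this
  -- conclude via lintegrals of bounded continuous ℝ≥0-valued functions
  refine ext_of_forall_lintegral_eq_of_IsFiniteMeasure (fun f => ?_)
  have hfc : Continuous (fun x : Torus => ((f x : ℝ))) :=
    NNReal.continuous_coe.comp f.continuous
  have hi : ∀ (ν : Measure Torus), IsFiniteMeasure ν →
      Integrable (fun x : Torus => ((f x : ℝ))) ν := by
    intro ν hν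
    refine Continuous.integrable_of_hasCompactSupport hfc ?_
    exact IsCompact.of_isClosed_subset isCompact_univ (isClosed_tsupport _) (Set.subset_univ _)
  rw [lintegral_coe_eq_integral _ (hi μ inferInstance),
    lintegral_coe_eq_integral _ (hi volume inferInstance)]
  congr 1
  have hC : Continuous (fun x : Torus => (((f x : ℝ)) : ℂ)) :=
    Complex.continuous_ofReal.comp hfc
  have key := htop ⟨fun x => (((f x : ℝ)) : ℂ), hC⟩
  simp only [ContinuousMap.coe_mk] at key
  have hiC : ∀ (ν : Measure Torus), IsFiniteMeasure ν →
      Integrable (fun x : Torus => (((f x : ℝ)) : ℂ)) ν := by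
    intro ν hν
    refine Continuous.integrable_of_hasCompactSupport hC ?_
    exact IsCompact.of_isClosed_subset isCompact_univ (isClosed_tsupport _) (Set.subset_univ _)
  have hre : ∀ (ν : Measure Torus), IsFiniteMeasure ν →
      ∫ x : Torus, ((f x : ℝ)) ∂ν = (∫ x : Torus, (((f x : ℝ)) : ℂ) ∂ν).re := by
    intro ν hν
    have h1 := integral_re (μ := ν) (hiC ν hν)
    simpa [RCLike.re_to_complex, Complex.ofReal_re] using h1
  rw [hre μ inferInstance, hre volume inferInstance, key]


end Stmt17Aux

theorem stmt17 (p : ℤ) (hp : 2 ≤ p) (μ : Measure Torus) [IsProbabilityMeasure μ]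
    [NullSingletonClass μ]
    (hinv : MeasurePreserving (timesMap p) μ μ)
    (hsm : ∀ A B : Set Torus, MeasurableSet A → MeasurableSet B →
      Tendsto (fun j => μ ((timesMap p)^[j] ⁻¹' A ∩ B)) atTop (nhds (μ A * μ B)))
    (l : ℤ) (hl : l ≠ 0) (A : Set ℕ) (hA : A.Infinite)
    (hinvA : ∀ j ∈ A, Measure.map (timesMap (p ^ j + l)) μ = μ) :
    (∀ k : ℤ, k ≠ 0 → fc μ k = 0) ∧ μ = volume := by
  have h1 : ∀ k : ℤ, k ≠ 0 → fc μ k = 0 := by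
    intro k hk
    -- the constant value along A
    have hconst : ∀ j ∈ A,
        (∫ x, fourier k ((timesMap p)^[j] x) * fourier (k * l) x ∂μ) = fc μ k := by
      intro j hj
      have e1 : fc μ k = fc μ (k * (p ^ j + l)) := Stmt17Aux.fc_map_eq _ _ (hinvA j hj)
      have e2 : k * (p ^ j + l) = k * p ^ j + k * l := by ring
      have e3 : fc μ (k * p ^ j + k * l)
          = ∫ x, fourier k ((timesMap p)^[j] x) * fourier (k * l) x ∂μ := by
        rw [fc]
        congr 1
        funext x
        rw [Stmt17Aux.fourier_timesMap_pow, fourier_add]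
      rw [e1, e2, e3]
    -- the mixing limit
    have hmix := Stmt17Aux.mix_fun hinv hsm
      (map_continuous (fourier k)).measurable
      (map_continuous (fourier (k * l))).measurable
      (Stmt17Aux.norm_fourier_le k) (Stmt17Aux.norm_fourier_le (k * l))
    -- a sequence in A tending to infinity
    have hu : ∀ n : ℕ, ∃ m ∈ A, n < m := fun n => hA.exists_gt n
    choose u huA hun using hu
    have hutend : Tendsto u atTop atTop :=
      tendsto_atTop_mono (fun n => (hun n).le) tendsto_id
    have h2 : Tendsto (fun n => ∫ x, fourier k ((timesMap p)^[u n] x)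
        * fourier (k * l) x ∂μ) atTop
        (nhds ((∫ x, fourier k x ∂μ) * ∫ x, fourier (k * l) x ∂μ)) := hmix.comp hutend
    have h3 : (fun n => ∫ x, fourier k ((timesMap p)^[u n] x) * fourier (k * l) x ∂μ)
        = fun _ => fc μ k := funext fun n => hconst (u n) (huA n)
    rw [h3] at h2
    have h4 : fc μ k = fc μ k * fc μ (k * l) := by
      have := tendsto_nhds_unique tendsto_const_nhds h2
      rw [fc, fc]
      exact this
    have h5 : fc μ (k * l) ≠ 1 := Stmt17Aux.fc_ne_one (mul_ne_zero hk hl)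
    by_contra h0
    exact h5 (mul_left_cancel₀ h0 (by rw [mul_one]; exact h4)).symm
  exact ⟨h1, Stmt17Aux.eq_volume h1⟩
end
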